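/- arXiv:1311.0332 — 2 statements merged into one kernel-verified Lean document; each statement's English description precedes it below -/
import Mathlib

section
/- Let ε be a positive real, r a base, d a digit in {0,1,...,r−1}, (w_j)_{j≥0} an infinite sequence of elements of {0,1,...,r−1}, and (b_t)_{t≥0} an increasing sequence of positive integers. Suppose there is an integer t_0 such that for all t > t_0: occ((w_{b_t+1},...,w_{b_{t+1}}), d)/(b_{t+1} − b_t) < 1/r − ε. Then liminf_{t→∞} occ((w_0,...,w_{b_t}), d)/(b_t + 1) < 1/r − ε/2. -/
theorem statement18 (ε : ℝ) (hε : 0 < ε) (r : ℕ) (hr : 2 ≤ r) (d : Fin r)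
    (w : ℕ → Fin r) (b : ℕ → ℕ) (hb : StrictMono b) (hb0 : ∀ t, 0 < b t)
    (t₀ : ℕ)
    (hseg : ∀ t > t₀,
      (((Finset.Ioc (b t) (b (t + 1))).filter (fun j => w j = d)).card : ℝ) /
          ((b (t + 1) - b t : ℕ) : ℝ) < 1 / (r : ℝ) - ε) :
    Filter.liminf (fun t : ℕ =>
        (((Finset.range (b t + 1)).filter (fun j => w j = d)).card : ℝ) /
          ((b t : ℝ) + 1))
      Filter.atTop < 1 / (r : ℝ) - ε / 2 := by
  set A : ℕ → ℕ := fun t => ((Finset.range (b t + 1)).filter (fun j => w j = d)).card with hA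
  set c : ℝ := 1 / (r : ℝ) - ε with hc
  -- positivity of c
  have hcpos : 0 < c := by
    have h1 := hseg (t₀ + 1) (by omega)
    refine lt_of_le_of_lt ?_ h1
    positivity
  -- segment bound
  have hsegR : ∀ n, t₀ + 1 ≤ n →
      (((Finset.Ioc (b n) (b (n + 1))).filter (fun j => w j = d)).card : ℝ)
        < c * ((b (n + 1) : ℝ) - (b n : ℝ)) := by
    intro n hn
    have h1 := hseg n (by omega)
    have hlt : b n < b (n + 1) := hb (Nat.lt_succ_self n)
    have hden : (0 : ℝ) < ((b (n + 1) - b n : ℕ) : ℝ) := by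
      have : 0 < b (n + 1) - b n := by omega
      exact_mod_cast this
    have := (div_lt_iff₀ hden).mp h1
    have hcast : ((b (n + 1) - b n : ℕ) : ℝ) = (b (n + 1) : ℝ) - (b n : ℝ) := by
      push_cast [Nat.cast_sub hlt.le]; ring
    rw [hcast] at this
    linarith
  -- counting split
  have hsplit : ∀ n, A (n + 1) = A n +
      ((Finset.Ioc (b n) (b (n + 1))).filter (fun j => w j = d)).card := by
    intro n
    have hle : b n < b (n + 1) := hb (Nat.lt_succ_self n)
    have hu : Finset.range (b (n + 1) + 1)
        = Finset.range (b n + 1) ∪ Finset.Ioc (b n) (b (n + 1)) := by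
      ext x
      simp only [Finset.mem_range, Finset.mem_union, Finset.mem_Ioc]
      omega
    have hdisj : Disjoint (Finset.range (b n + 1)) (Finset.Ioc (b n) (b (n + 1))) := by
      rw [Finset.disjoint_left]
      intro x hx hx'
      simp only [Finset.mem_range] at hx
      simp only [Finset.mem_Ioc] at hx'
      omega
    simp only [hA]
    rw [hu, Finset.filter_union,
      Finset.card_union_of_disjoint (Finset.disjoint_filter_filter hdisj)]
  -- main induction
  have key : ∀ t, t₀ + 1 ≤ t →
      (A t : ℝ) ≤ (A (t₀ + 1) : ℝ) + c * ((b t : ℝ) - (b (t₀ + 1) : ℝ)) := by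
    intro t ht
    induction t with
    | zero => omega
    | succ n ih =>
      rcases Nat.lt_or_ge n (t₀ + 1) with h | h
      · have hn : n + 1 = t₀ + 1 := by omega
        rw [hn]; simp
      · have hn := ih h
        have hs := hsplit n
        have hsg := hsegR n h
        have : (A (n + 1) : ℝ)
            = (A n : ℝ) + (((Finset.Ioc (b n) (b (n + 1))).filter (fun j => w j = d)).card : ℝ) := by
          exact_mod_cast congrArg (Nat.cast : ℕ → ℝ) hs
        rw [this]
        linarith
  -- eventual bound on f
  set C : ℝ := (A (t₀ + 1) : ℝ) with hC
  have hC0 : 0 ≤ C := Nat.cast_nonneg _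
  obtain ⟨M, hM⟩ := exists_nat_ge (4 * C / ε)
  have hbtop : Filter.Tendsto b Filter.atTop Filter.atTop := hb.tendsto_atTop
  have hev1 : ∀ᶠ t in Filter.atTop, M ≤ b t := hbtop.eventually_ge_atTop M
  have hev2 : ∀ᶠ t in Filter.atTop, t₀ + 1 ≤ t := Filter.eventually_ge_atTop (t₀ + 1)
  have hev : ∀ᶠ t in Filter.atTop,
      (fun t : ℕ => ((Finset.range (b t + 1)).filter (fun j => w j = d)).card / ((b t : ℝ) + 1)) t
        ≤ c + ε / 4 := by
    filter_upwards [hev1, hev2] with t hMt ht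
    have hbpos : (0 : ℝ) < (b t : ℝ) + 1 := by positivity
    have hAt : (A t : ℝ) ≤ C + c * (b t : ℝ) := by
      have := key t ht
      have hb0' : (0 : ℝ) ≤ (b (t₀ + 1) : ℝ) := Nat.cast_nonneg _
      nlinarith
    have h2 : (A t : ℝ) / ((b t : ℝ) + 1) ≤ (C + c * (b t : ℝ)) / ((b t : ℝ) + 1) := by
      gcongr
    have h3 : (C + c * (b t : ℝ)) / ((b t : ℝ) + 1) ≤ C / ((b t : ℝ) + 1) + c := by
      rw [add_div]
      have : c * (b t : ℝ) / ((b t : ℝ) + 1) ≤ c := by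
        rw [div_le_iff₀ hbpos]
        nlinarith [Nat.cast_nonneg (α := ℝ) (b t)]
      linarith
    have h4 : C / ((b t : ℝ) + 1) ≤ ε / 4 := by
      rw [div_le_iff₀ hbpos]
      have hMb : (M : ℝ) ≤ (b t : ℝ) := by exact_mod_cast hMt
      have : 4 * C / ε ≤ (b t : ℝ) := le_trans hM hMb
      rw [div_le_iff₀ hε] at this
      nlinarith
    calc (A t : ℝ) / ((b t : ℝ) + 1) ≤ _ := h2
      _ ≤ C / ((b t : ℝ) + 1) + c := h3
      _ ≤ c + ε / 4 := by linarith
  -- conclude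
  have hbdd : Filter.IsBoundedUnder (· ≥ ·) Filter.atTop
      (fun t : ℕ => ((Finset.range (b t + 1)).filter (fun j => w j = d)).card / ((b t : ℝ) + 1)) := by
    refine Filter.isBoundedUnder_of ⟨0, fun t => ?_⟩
    positivity
  have hli := Filter.liminf_le_of_frequently_le hev.frequently hbdd
  have : c + ε / 4 < 1 / (r : ℝ) - ε / 2 := by rw [hc]; linarith
  exact lt_of_le_of_lt hli this
end

section
/- Suppose that, for k ≥ 1, K_k is a subset of the real line consisting of N_k closed intervals each of length δ_k, and that each interval of K_k contains N_{k+1}/N_k disjoint intervals of K_{k+1}. If v_0 ∈ (0,1] is such that for every v < v_0 the series Σ_{k≥2} (δ_{k−1}/δ_k)·(N_k·δ_k^v)^{−1} converges, then the Hausdorff dimension of the set ⋂_{k≥1} K_k is greater than or equal to v_0. -/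
set_option linter.unusedSectionVars false
set_option linter.unusedVariables false
set_option maxHeartbeats 1000000

open Set MeasureTheory NNReal ENNReal Filter Topology

namespace Egg3

noncomputable def φ (c d x : ℝ) : ℝ := min 1 (max 0 ((x - c)/d))

lemma φ_nonneg (c d x : ℝ) : 0 ≤ φ c d x := le_min zero_le_one (le_max_left _ _)
lemma φ_le_one (c d x : ℝ) : φ c d x ≤ 1 := min_le_left _ _

lemma φ_of_le (c d x : ℝ) (hd : 0 < d) (h : x ≤ c) : φ c d x = 0 := by
  unfold φ
  have h' : (x - c)/d ≤ 0 := div_nonpos_of_nonpos_of_nonneg (by linarith) hd.le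
  rw [max_eq_left h', min_eq_right zero_le_one]

lemma φ_of_ge (c d x : ℝ) (hd : 0 < d) (h : c + d ≤ x) : φ c d x = 1 := by
  unfold φ
  have h1 : (1:ℝ) ≤ (x - c)/d := (le_div_iff₀ hd).2 (by linarith)
  rw [max_eq_right (by linarith), min_eq_left h1]

lemma φ_mono (c d : ℝ) (hd : 0 < d) : Monotone (φ c d) := fun x y hxy => by
  unfold φ
  exact min_le_min le_rfl (max_le_max le_rfl (div_le_div_of_nonneg_right (by linarith) hd.le))

lemma φ_continuous (c d : ℝ) : Continuous (φ c d) := by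
  unfold φ; fun_prop

section

variable {N : ℕ → ℕ} {δ : ℕ → ℝ} {a : (k : ℕ) → Fin (N k) → ℝ}
variable (hN : ∀ k, 1 ≤ k → 0 < N k) (hδ : ∀ k, 1 ≤ k → 0 < δ k)
variable (hdisj : ∀ k, 1 ≤ k → ∀ i j : Fin (N k), i ≠ j →
      Disjoint (Set.Icc (a k i) (a k i + δ k)) (Set.Icc (a k j) (a k j + δ k)))
variable (hdvd : ∀ k, 1 ≤ k → N k ∣ N (k + 1))
variable (hsub : ∀ k, 1 ≤ k → ∀ i : Fin (N k),
      Nat.card {j : Fin (N (k + 1)) //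
          Set.Icc (a (k + 1) j) (a (k + 1) j + δ (k + 1)) ⊆
            Set.Icc (a k i) (a k i + δ k)} = N (k + 1) / N k)

open Classical in
noncomputable def S (a : (k : ℕ) → Fin (N k) → ℝ) (δ : ℕ → ℝ) (k : ℕ) (i : Fin (N k)) :
    Finset (Fin (N (k+1))) :=
  Finset.univ.filter (fun j => Set.Icc (a (k + 1) j) (a (k + 1) j + δ (k + 1)) ⊆
            Set.Icc (a k i) (a k i + δ k))

include hsub in
lemma card_S (k : ℕ) (hk : 1 ≤ k) (i : Fin (N k)) : (S a δ k i).card = N (k+1) / N k := by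
  classical
  rw [← hsub k hk i, Nat.card_eq_fintype_card, Fintype.card_subtype]
  congr 1

include hδ in
lemma S_endpoints {k : ℕ} (hk : 1 ≤ k) {i : Fin (N k)} {j : Fin (N (k+1))}
    (hj : j ∈ S a δ k i) :
    a k i ≤ a (k+1) j ∧ a (k+1) j + δ (k+1) ≤ a k i + δ k := by
  classical
  have hδ' : 0 < δ (k+1) := hδ (k+1) (by omega)
  have hsubs := (Finset.mem_filter.1 hj).2
  have h2 := hsubs (Set.left_mem_Icc.2 (by linarith))
  have h3 := hsubs (Set.right_mem_Icc.2 (by linarith))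
  simp only [Set.mem_Icc] at h2 h3
  exact ⟨h2.1, h3.2⟩

include hδ hdisj in
lemma disjoint_S (k : ℕ) (hk : 1 ≤ k) {i i' : Fin (N k)} (h : i ≠ i') :
    Disjoint (S a δ k i) (S a δ k i') := by
  classical
  rw [Finset.disjoint_left]
  intro j hj hj'
  simp only [S, Finset.mem_filter] at hj hj'
  have hne : (Set.Icc (a (k+1) j) (a (k+1) j + δ (k+1))).Nonempty :=
    Set.nonempty_Icc.2 (by linarith [hδ (k+1) (le_trans hk (Nat.le_succ k))])
  have := (hdisj k hk i i' h).mono hj.2 hj'.2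
  rw [disjoint_self] at this
  rw [this] at hne
  exact Set.not_nonempty_empty hne

include hN hδ hdisj hdvd hsub in
lemma biUnion_S (k : ℕ) (hk : 1 ≤ k) :
    Finset.univ.biUnion (S a δ k) = (Finset.univ : Finset (Fin (N (k+1)))) := by
  classical
  apply Finset.eq_univ_of_card
  rw [Finset.card_biUnion (fun i _ i' _ h => disjoint_S hδ hdisj k hk h)]
  simp only [card_S hsub k hk]
  rw [Finset.sum_const, Finset.card_univ, Fintype.card_fin, smul_eq_mul,
    Nat.mul_div_cancel' (hdvd k hk), Fintype.card_fin]

include hN hδ hdisj hdvd hsub in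
lemma exists_parent (k : ℕ) (hk : 1 ≤ k) (j : Fin (N (k+1))) :
    ∃ i : Fin (N k), Set.Icc (a (k + 1) j) (a (k + 1) j + δ (k + 1)) ⊆
            Set.Icc (a k i) (a k i + δ k) := by
  classical
  have : j ∈ Finset.univ.biUnion (S a δ k) := by
    rw [biUnion_S hN hδ hdisj hdvd hsub k hk]; exact Finset.mem_univ j
  rcases Finset.mem_biUnion.1 this with ⟨i, -, hi⟩
  exact ⟨i, (Finset.mem_filter.1 hi).2⟩

include hN hδ hdisj hdvd hsub in
lemma δ_anti (k : ℕ) (hk : 1 ≤ k) : δ (k+1) ≤ δ k := by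
  have h1 : 0 < N (k+1) := hN (k+1) (le_trans hk (Nat.le_succ k))
  obtain ⟨j⟩ : Nonempty (Fin (N (k+1))) := ⟨⟨0, h1⟩⟩
  obtain ⟨i, hi⟩ := exists_parent hN hδ hdisj hdvd hsub k hk j
  have h2 := hi (Set.left_mem_Icc.2 (by linarith [hδ (k+1) (le_trans hk (Nat.le_succ k))]))
  have h3 := hi (Set.right_mem_Icc.2 (by linarith [hδ (k+1) (le_trans hk (Nat.le_succ k))]))
  simp only [Set.mem_Icc] at h2 h3
  linarith [h2.1, h3.2]

include hN hδ hdisj hdvd hsub in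
lemma δ_le (k l : ℕ) (hk : 1 ≤ k) (hl : k ≤ l) : δ l ≤ δ k := by
  induction l with
  | zero => omega
  | succ n ih =>
    rcases Nat.lt_or_ge k (n+1) with h|h
    · exact le_trans (δ_anti hN hδ hdisj hdvd hsub n (by omega)) (ih (by omega))
    · have : k = n + 1 := le_antisymm hl h
      subst this; rfl

include hN hdvd in
lemma N_mono (k l : ℕ) (hk : 1 ≤ k) (hl : k ≤ l) : N k ≤ N l := by
  induction l with
  | zero => omega
  | succ n ih =>
    rcases Nat.lt_or_ge k (n+1) with h|h
    · exact le_trans (ih (by omega)) (Nat.le_of_dvd (hN (n+1) (by omega)) (hdvd n (by omega)))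
    · have : k = n + 1 := le_antisymm hl h
      subst this; rfl

/-- level-`k` CDF -/
noncomputable def f (N : ℕ → ℕ) (δ : ℕ → ℝ) (a : (k : ℕ) → Fin (N k) → ℝ) (k : ℕ) (x : ℝ) : ℝ :=
  (N k : ℝ)⁻¹ * ∑ i : Fin (N k), φ (a k i) (δ k) x

include hδ in
lemma f_mono (k : ℕ) (hk : 1 ≤ k) : Monotone (f N δ a k) := by
  intro x y hxy
  unfold f
  have : ∀ i : Fin (N k), φ (a k i) (δ k) x ≤ φ (a k i) (δ k) y :=
    fun i => φ_mono _ _ (hδ k hk) hxy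
  exact mul_le_mul_of_nonneg_left (Finset.sum_le_sum fun i _ => this i) (by positivity)

lemma f_continuous (k : ℕ) : Continuous (f N δ a k) := by
  unfold f
  exact continuous_const.mul (continuous_finset_sum _ fun i _ => φ_continuous _ _)

lemma f_nonneg (k : ℕ) (x : ℝ) : 0 ≤ f N δ a k x := by
  unfold f
  have : (0:ℝ) ≤ ∑ i : Fin (N k), φ (a k i) (δ k) x :=
    Finset.sum_nonneg fun i _ => φ_nonneg _ _ _
  positivity

/-- `x` avoids the interiors of all level-`k` intervals -/
def notIn (a : (k : ℕ) → Fin (N k) → ℝ) (δ : ℕ → ℝ) (k : ℕ) (x : ℝ) : Prop :=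
  ∀ i : Fin (N k), x ∉ Set.Ioo (a k i) (a k i + δ k)

include hN hδ hdisj hdvd hsub in
lemma notIn_succ {k : ℕ} (hk : 1 ≤ k) {x : ℝ} (hx : notIn a δ k x) : notIn a δ (k+1) x := by
  intro j hj
  obtain ⟨i, hi⟩ := exists_parent hN hδ hdisj hdvd hsub k hk j
  have hδ' : 0 < δ (k+1) := hδ (k+1) (by omega)
  have h2 := hi (Set.left_mem_Icc.2 (by linarith))
  have h3 := hi (Set.right_mem_Icc.2 (by linarith))
  simp only [Set.mem_Icc] at h2 h3
  rcases hj with ⟨hj1, hj2⟩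
  exact hx i ⟨lt_of_le_of_lt h2.1 hj1, lt_of_lt_of_le hj2 h3.2⟩

include hN hδ hdisj hdvd hsub in
lemma f_succ_eq {k : ℕ} (hk : 1 ≤ k) {x : ℝ} (hx : notIn a δ k x) :
    f N δ a (k+1) x = f N δ a k x := by
  classical
  have hδk : 0 < δ k := hδ k hk
  have hδk1 : 0 < δ (k+1) := hδ (k+1) (by omega)
  have key : ∀ i : Fin (N k), ∑ j ∈ S a δ k i, φ (a (k+1) j) (δ (k+1)) x
      = ((N (k+1) / N k : ℕ) : ℝ) * φ (a k i) (δ k) x := by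
    intro i
    have hcases : x ≤ a k i ∨ a k i + δ k ≤ x := by
      rcases le_or_gt x (a k i) with h|h
      · exact Or.inl h
      · refine Or.inr ?_
        by_contra hc
        exact hx i ⟨h, not_le.1 hc⟩
    rcases hcases with h|h
    · rw [Finset.sum_eq_zero, φ_of_le _ _ _ hδk h, mul_zero]
      intro j hj
      exact φ_of_le _ _ _ hδk1 (le_trans h (S_endpoints hδ hk hj).1)
    · have : ∀ j ∈ S a δ k i, φ (a (k+1) j) (δ (k+1)) x = 1 := fun j hj =>
        φ_of_ge _ _ _ hδk1 (le_trans (S_endpoints hδ hk hj).2 h)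
      rw [Finset.sum_congr rfl this, Finset.sum_const, card_S hsub k hk,
        φ_of_ge _ _ _ hδk h, nsmul_eq_mul, mul_one]
  have hNk : ((N k : ℕ) : ℝ) ≠ 0 := Nat.cast_ne_zero.2 (hN k hk).ne'
  have hNk1 : ((N (k+1) : ℕ) : ℝ) ≠ 0 := Nat.cast_ne_zero.2 (hN (k+1) (by omega)).ne'
  have hcast : ((N (k+1) / N k : ℕ) : ℝ) = (N (k+1) : ℝ) / (N k : ℝ) :=
    Nat.cast_div (hdvd k hk) hNk
  have step : (∑ j : Fin (N (k+1)), φ (a (k+1) j) (δ (k+1)) x)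
      = ∑ i : Fin (N k), ∑ j ∈ S a δ k i, φ (a (k+1) j) (δ (k+1)) x := by
    rw [← biUnion_S hN hδ hdisj hdvd hsub k hk,
      Finset.sum_biUnion (fun i _ i' _ h => disjoint_S hδ hdisj k hk h)]
  unfold f
  rw [step]
  simp_rw [key, hcast]
  rw [← Finset.mul_sum]
  field_simp

include hN hδ hdisj hdvd hsub in
lemma notIn_of_le {k l : ℕ} (hk : 1 ≤ k) (hl : k ≤ l) {x : ℝ} (hx : notIn a δ k x) :
    notIn a δ l x := by
  induction l with
  | zero => omega
  | succ p ihp =>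
    rcases Nat.lt_or_ge k (p+1) with h'|h'
    · exact notIn_succ hN hδ hdisj hdvd hsub (by omega) (ihp (by omega))
    · have : k = p + 1 := le_antisymm hl h'
      subst this; exact hx

include hN hδ hdisj hdvd hsub in
lemma f_eq_of_notIn {k m : ℕ} (hk : 1 ≤ k) (hm : k ≤ m) {x : ℝ} (hx : notIn a δ k x) :
    f N δ a m x = f N δ a k x := by
  induction m with
  | zero => omega
  | succ n ih =>
    rcases Nat.lt_or_ge k (n+1) with h|h
    · rw [f_succ_eq hN hδ hdisj hdvd hsub (show 1 ≤ n by omega)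
        (notIn_of_le hN hδ hdisj hdvd hsub hk (by omega) hx), ih (by omega)]
    · have : k = n + 1 := le_antisymm hm h
      subst this; rfl

include hδ hdisj in
lemma sep {k : ℕ} (hk : 1 ≤ k) {i i' : Fin (N k)} (h : i ≠ i') :
    a k i' + δ k < a k i ∨ a k i + δ k < a k i' := by
  by_contra hc
  push_neg at hc
  have hδk : 0 < δ k := hδ k hk
  have hmem : max (a k i) (a k i') ∈ Set.Icc (a k i) (a k i + δ k) ∩
      Set.Icc (a k i') (a k i' + δ k) := by
    constructor
    · exact ⟨le_max_left _ _, max_le (by linarith) (by linarith [hc.1])⟩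
    · exact ⟨le_max_right _ _, max_le (by linarith [hc.2]) (by linarith)⟩
  have := Set.disjoint_left.1 (hdisj k hk i i' h) hmem.1 hmem.2
  exact this

include hδ hdisj in
lemma notIn_left {k : ℕ} (hk : 1 ≤ k) (i : Fin (N k)) : notIn a δ k (a k i) := by
  intro i' hmem
  rcases eq_or_ne i' i with rfl|h
  · exact absurd hmem.1 (lt_irrefl _)
  · rcases sep hδ hdisj hk h with h'|h'
    · rcases hmem with ⟨h1, h2⟩; linarith
    · rcases hmem with ⟨h1, h2⟩; linarith [hδ k hk]

include hδ hdisj in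
lemma notIn_right {k : ℕ} (hk : 1 ≤ k) (i : Fin (N k)) : notIn a δ k (a k i + δ k) := by
  intro i' hmem
  rcases eq_or_ne i' i with rfl|h
  · exact absurd hmem.2 (lt_irrefl _)
  · rcases sep hδ hdisj hk (fun he => h he.symm) with h'|h'
    · rcases hmem with ⟨h1, h2⟩; linarith [hδ k hk]
    · rcases hmem with ⟨h1, h2⟩; linarith

include hN hδ hdisj in
lemma f_jump {k : ℕ} (hk : 1 ≤ k) (i : Fin (N k)) :
    f N δ a k (a k i + δ k) = f N δ a k (a k i) + (N k : ℝ)⁻¹ := by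
  classical
  have hδk : 0 < δ k := hδ k hk
  have hsum : ∑ i' : Fin (N k), (φ (a k i') (δ k) (a k i + δ k) - φ (a k i') (δ k) (a k i)) = 1 := by
    rw [Finset.sum_eq_single i]
    · rw [φ_of_ge _ _ _ hδk le_rfl, φ_of_le _ _ _ hδk le_rfl]; ring
    · intro i' _ h
      rcases sep hδ hdisj hk h with h'|h'
      · rw [φ_of_le _ _ _ hδk (by linarith), φ_of_le _ _ _ hδk (by linarith)]; ring
      · rw [φ_of_ge _ _ _ hδk (by linarith), φ_of_ge _ _ _ hδk (by linarith)]; ring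
    · intro h; exact absurd (Finset.mem_univ i) h
  have hNk : ((N k : ℕ) : ℝ) ≠ 0 := Nat.cast_ne_zero.2 (hN k hk).ne'
  unfold f
  rw [Finset.sum_sub_distrib] at hsum
  have : (∑ i' : Fin (N k), φ (a k i') (δ k) (a k i + δ k))
      = (∑ i' : Fin (N k), φ (a k i') (δ k) (a k i)) + 1 := by linarith
  rw [this]
  field_simp

include hN in
lemma f_le_one (k : ℕ) (hk : 1 ≤ k) (x : ℝ) : f N δ a k x ≤ 1 := by
  unfold f
  have h1 : (∑ i : Fin (N k), φ (a k i) (δ k) x) ≤ (N k : ℝ) := by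
    calc (∑ i : Fin (N k), φ (a k i) (δ k) x) ≤ ∑ _i : Fin (N k), (1:ℝ) :=
          Finset.sum_le_sum fun i _ => φ_le_one _ _ _
      _ = (N k : ℝ) := by simp
  have hNk : (0:ℝ) < (N k : ℝ) := Nat.cast_pos.2 (hN k hk)
  calc (N k : ℝ)⁻¹ * ∑ i : Fin (N k), φ (a k i) (δ k) x ≤ (N k : ℝ)⁻¹ * (N k : ℝ) :=
        mul_le_mul_of_nonneg_left h1 (by positivity)
    _ = 1 := inv_mul_cancel₀ hNk.ne'

include hN hδ hdisj hdvd hsub in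
lemma f_dist_le {k m : ℕ} (hk : 1 ≤ k) (hm : k ≤ m) (x : ℝ) :
    |f N δ a m x - f N δ a k x| ≤ (N k : ℝ)⁻¹ := by
  by_cases hx : notIn a δ k x
  · rw [f_eq_of_notIn hN hδ hdisj hdvd hsub hk hm hx, sub_self, abs_zero]
    positivity
  · unfold notIn at hx
    push_neg at hx
    obtain ⟨i, hi⟩ := hx
    have e1 : f N δ a m (a k i) = f N δ a k (a k i) :=
      f_eq_of_notIn hN hδ hdisj hdvd hsub hk hm (notIn_left hδ hdisj hk i)
    have e2 : f N δ a m (a k i + δ k) = f N δ a k (a k i + δ k) :=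
      f_eq_of_notIn hN hδ hdisj hdvd hsub hk hm (notIn_right hδ hdisj hk i)
    have hj := f_jump hN hδ hdisj hk i
    have hm1 : 1 ≤ m := le_trans hk hm
    have b1 : f N δ a k (a k i) ≤ f N δ a k x := f_mono hδ k hk hi.1.le
    have b2 : f N δ a k x ≤ f N δ a k (a k i + δ k) := f_mono hδ k hk hi.2.le
    have b3 : f N δ a m (a k i) ≤ f N δ a m x := f_mono hδ m hm1 hi.1.le
    have b4 : f N δ a m x ≤ f N δ a m (a k i + δ k) := f_mono hδ m hm1 hi.2.le
    rw [abs_sub_le_iff]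
    constructor <;> linarith

end

/-- The limiting CDF. -/
noncomputable def F (N : ℕ → ℕ) (δ : ℕ → ℝ) (a : (k : ℕ) → Fin (N k) → ℝ) (x : ℝ) : ℝ :=
  limUnder atTop (fun n => f N δ a (n+1) x)

section

variable {N : ℕ → ℕ} {δ : ℕ → ℝ} {a : (k : ℕ) → Fin (N k) → ℝ}
variable (hN : ∀ k, 1 ≤ k → 0 < N k) (hδ : ∀ k, 1 ≤ k → 0 < δ k)
variable (hdisj : ∀ k, 1 ≤ k → ∀ i j : Fin (N k), i ≠ j →
      Disjoint (Set.Icc (a k i) (a k i + δ k)) (Set.Icc (a k j) (a k j + δ k)))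
variable (hdvd : ∀ k, 1 ≤ k → N k ∣ N (k + 1))
variable (hsub : ∀ k, 1 ≤ k → ∀ i : Fin (N k),
      Nat.card {j : Fin (N (k + 1)) //
          Set.Icc (a (k + 1) j) (a (k + 1) j + δ (k + 1)) ⊆
            Set.Icc (a k i) (a k i + δ k)} = N (k + 1) / N k)
variable (hNinf : Tendsto (fun k => ((N k : ℝ))⁻¹) atTop (𝓝 0))

include hN hδ hdisj hdvd hsub hNinf in
lemma tendsto_F (x : ℝ) : Tendsto (fun n => f N δ a (n+1) x) atTop (𝓝 (F N δ a x)) := by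
  have hc : CauchySeq (fun n => f N δ a (n+1) x) := by
    apply cauchySeq_of_le_tendsto_0 (fun n => (N (n+1) : ℝ)⁻¹)
    · intro n m k hn hm
      rcases le_total n m with h|h
      · rw [Real.dist_eq, abs_sub_comm]
        calc |f N δ a (m+1) x - f N δ a (n+1) x| ≤ (N (n+1) : ℝ)⁻¹ :=
              f_dist_le hN hδ hdisj hdvd hsub (by omega) (by omega) x
          _ ≤ (N (k+1) : ℝ)⁻¹ := by
              apply inv_anti₀
              · exact_mod_cast hN (k+1) (by omega)
              · exact_mod_cast N_mono hN hdvd (k+1) (n+1) (by omega) (by omega)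
      · rw [Real.dist_eq]
        calc |f N δ a (n+1) x - f N δ a (m+1) x| ≤ (N (m+1) : ℝ)⁻¹ :=
              f_dist_le hN hδ hdisj hdvd hsub (by omega) (by omega) x
          _ ≤ (N (k+1) : ℝ)⁻¹ := by
              apply inv_anti₀
              · exact_mod_cast hN (k+1) (by omega)
              · exact_mod_cast N_mono hN hdvd (k+1) (m+1) (by omega) (by omega)
    · exact hNinf.comp (tendsto_add_atTop_nat 1)
  obtain ⟨y, hy⟩ := cauchySeq_tendsto_of_complete hc
  exact tendsto_nhds_limUnder ⟨y, hy⟩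

include hN hδ hdisj hdvd hsub hNinf in
lemma F_eq_f {k : ℕ} (hk : 1 ≤ k) {x : ℝ} (hx : notIn a δ k x) : F N δ a x = f N δ a k x := by
  have h1 : Tendsto (fun n => f N δ a (n+1) x) atTop (𝓝 (f N δ a k x)) := by
    apply Tendsto.congr' _ tendsto_const_nhds
    filter_upwards [eventually_ge_atTop k] with n hn
    exact (f_eq_of_notIn hN hδ hdisj hdvd hsub hk (by omega) hx).symm
  exact tendsto_nhds_unique (tendsto_F hN hδ hdisj hdvd hsub hNinf x) h1

include hN hδ hdisj hdvd hsub hNinf in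
lemma F_sub_f {k : ℕ} (hk : 1 ≤ k) (x : ℝ) : |F N δ a x - f N δ a k x| ≤ (N k : ℝ)⁻¹ := by
  have h1 : Tendsto (fun n => |f N δ a (n+1) x - f N δ a k x|) atTop
      (𝓝 |F N δ a x - f N δ a k x|) :=
    (((tendsto_F hN hδ hdisj hdvd hsub hNinf x).sub tendsto_const_nhds).abs)
  apply le_of_tendsto h1
  filter_upwards [eventually_ge_atTop k] with n hn
  exact f_dist_le hN hδ hdisj hdvd hsub hk (by omega) x

include hN hδ hdisj hdvd hsub hNinf in
lemma F_mono : Monotone (F N δ a) := fun x y hxy =>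
  le_of_tendsto_of_tendsto' (tendsto_F hN hδ hdisj hdvd hsub hNinf x)
    (tendsto_F hN hδ hdisj hdvd hsub hNinf y) (fun n => f_mono hδ (n+1) (by omega) hxy)

include hN hδ hdisj hdvd hsub hNinf in
lemma F_continuous : Continuous (F N δ a) := by
  have hu : TendstoUniformly (fun n x => f N δ a (n+1) x) (F N δ a) atTop := by
    rw [Metric.tendstoUniformly_iff]
    intro ε hε
    have : ∀ᶠ n in atTop, (N (n+1) : ℝ)⁻¹ < ε := by
      have := hNinf.comp (tendsto_add_atTop_nat 1)
      exact this.eventually_lt_const hε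
    filter_upwards [this] with n hn x
    rw [Real.dist_eq]
    calc |F N δ a x - f N δ a (n+1) x| ≤ (N (n+1) : ℝ)⁻¹ :=
          F_sub_f hN hδ hdisj hdvd hsub hNinf (by omega) x
      _ < ε := hn
  exact hu.continuous (Frequently.of_forall fun n => f_continuous (n+1))

include hN hδ hdisj hdvd hsub hNinf in
lemma F_nonneg (x : ℝ) : 0 ≤ F N δ a x :=
  ge_of_tendsto (tendsto_F hN hδ hdisj hdvd hsub hNinf x)
    (Eventually.of_forall fun n => f_nonneg (n+1) x)

include hN hδ hdisj hdvd hsub hNinf in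
lemma F_le_one (x : ℝ) : F N δ a x ≤ 1 :=
  le_of_tendsto (tendsto_F hN hδ hdisj hdvd hsub hNinf x)
    (Eventually.of_forall fun n => f_le_one hN (n+1) (by omega) x)

include hN hδ hdisj hdvd hsub hNinf in
lemma F_jump {k : ℕ} (hk : 1 ≤ k) (i : Fin (N k)) :
    F N δ a (a k i + δ k) = F N δ a (a k i) + (N k : ℝ)⁻¹ := by
  rw [F_eq_f hN hδ hdisj hdvd hsub hNinf hk (notIn_right hδ hdisj hk i),
    F_eq_f hN hδ hdisj hdvd hsub hNinf hk (notIn_left hδ hdisj hk i)]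
  exact f_jump hN hδ hdisj hk i

include hN hδ hdisj hdvd hsub hNinf in
lemma tendsto_F_atTop : Tendsto (F N δ a) atTop (𝓝 1) := by
  haveI : Nonempty (Fin (N 1)) := ⟨⟨0, hN 1 le_rfl⟩⟩
  set M := Finset.univ.sup' Finset.univ_nonempty (fun i : Fin (N 1) => a 1 i + δ 1) with hM
  apply Tendsto.congr' _ (tendsto_const_nhds (α := ℝ) (f := atTop (α := ℝ)))
  filter_upwards [eventually_ge_atTop M] with x hx
  have hle : ∀ i : Fin (N 1), a 1 i + δ 1 ≤ x := fun i =>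
    le_trans (Finset.le_sup' (fun i : Fin (N 1) => a 1 i + δ 1) (Finset.mem_univ i)) hx
  have hnot : notIn a δ 1 x := fun i hmem => absurd hmem.2 (not_lt.2 (hle i))
  rw [F_eq_f hN hδ hdisj hdvd hsub hNinf le_rfl hnot]
  unfold f
  rw [Finset.sum_congr rfl (fun i _ => φ_of_ge _ _ _ (hδ 1 le_rfl) (hle i))]
  have hN1 : ((N 1 : ℕ) : ℝ) ≠ 0 := Nat.cast_ne_zero.2 (hN 1 le_rfl).ne'
  simp [inv_mul_cancel₀ hN1]

include hN hδ hdisj hdvd hsub hNinf in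
lemma tendsto_F_atBot : Tendsto (F N δ a) atBot (𝓝 0) := by
  haveI : Nonempty (Fin (N 1)) := ⟨⟨0, hN 1 le_rfl⟩⟩
  set M := Finset.univ.inf' Finset.univ_nonempty (fun i : Fin (N 1) => a 1 i) with hM
  apply Tendsto.congr' _ (tendsto_const_nhds (α := ℝ) (f := atBot (α := ℝ)))
  filter_upwards [eventually_le_atBot M] with x hx
  have hle : ∀ i : Fin (N 1), x ≤ a 1 i := fun i =>
    le_trans hx (Finset.inf'_le (fun i : Fin (N 1) => a 1 i) (Finset.mem_univ i))
  have hnot : notIn a δ 1 x := fun i hmem =>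
    absurd hmem.1 (not_lt.2 (hle i))
  rw [F_eq_f hN hδ hdisj hdvd hsub hNinf le_rfl hnot]
  unfold f
  rw [Finset.sum_congr rfl (fun i _ => φ_of_le _ _ _ (hδ 1 le_rfl) (hle i))]
  simp

end
end Egg3

open Egg3 in
/-- Eggleston's lemma.  For `k ≥ 1`, `K k` is the union of `N k` pairwise disjoint
closed intervals `[a k i, a k i + δ k]` of length `δ k`, and each interval of `K k`
contains exactly `N (k+1) / N k` of the (pairwise disjoint) intervals of `K (k+1)`.
If `v₀ ∈ (0,1]` is such that for every `v < v₀` the series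
`Σ_{k≥2} (δ_{k-1}/δ_k)·(N_k·δ_k^v)⁻¹` converges, then the Hausdorff dimension of
`⋂_{k≥1} K k` is at least `v₀`. -/
theorem statement19 (N : ℕ → ℕ) (δ : ℕ → ℝ) (a : (k : ℕ) → Fin (N k) → ℝ)
    (K : ℕ → Set ℝ)
    (hN : ∀ k, 1 ≤ k → 0 < N k) (hδ : ∀ k, 1 ≤ k → 0 < δ k)
    (hK : ∀ k, 1 ≤ k → K k = ⋃ i : Fin (N k), Set.Icc (a k i) (a k i + δ k))
    (hdisj : ∀ k, 1 ≤ k → ∀ i j : Fin (N k), i ≠ j →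
      Disjoint (Set.Icc (a k i) (a k i + δ k)) (Set.Icc (a k j) (a k j + δ k)))
    (hdvd : ∀ k, 1 ≤ k → N k ∣ N (k + 1))
    (hsub : ∀ k, 1 ≤ k → ∀ i : Fin (N k),
      Nat.card {j : Fin (N (k + 1)) //
          Set.Icc (a (k + 1) j) (a (k + 1) j + δ (k + 1)) ⊆
            Set.Icc (a k i) (a k i + δ k)} = N (k + 1) / N k)
    (v₀ : ℝ) (hv₀ : 0 < v₀) (hv₀1 : v₀ ≤ 1)
    (hsum : ∀ v : ℝ, v < v₀ →
      Summable (fun k : ℕ =>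
        δ (k + 1) / δ (k + 2) * ((N (k + 2) : ℝ) * δ (k + 2) ^ v)⁻¹)) :
    ENNReal.ofReal v₀ ≤ dimH (⋂ k : ℕ, ⋂ (_ : 1 ≤ k), K k) := by
  classical
  set E := ⋂ k : ℕ, ⋂ (_ : 1 ≤ k), K k with hE
  -- the union sets
  set U : ℕ → Set ℝ := fun k => ⋃ i : Fin (N k), Set.Icc (a k i) (a k i + δ k) with hU
  have hUmeas : ∀ k, MeasurableSet (U k) := fun k =>
    MeasurableSet.iUnion fun i => measurableSet_Icc
  have hUsub : ∀ k, 1 ≤ k → U (k+1) ⊆ U k := by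
    intro k hk x hx
    rcases Set.mem_iUnion.1 hx with ⟨j, hj⟩
    obtain ⟨i, hi⟩ := exists_parent hN hδ hdisj hdvd hsub k hk j
    exact Set.mem_iUnion.2 ⟨i, hi hj⟩
  have hUsub1 : ∀ k, 1 ≤ k → U k ⊆ U 1 := by
    intro k hk
    induction k with
    | zero => omega
    | succ n ih =>
      rcases Nat.lt_or_ge 1 (n+1) with h|h
      · exact (hUsub n (by omega)).trans (ih (by omega))
      · have : n + 1 = 1 := by omega
        rw [this]
  -- volume computation and N·δ bound
  have hvolU : ∀ k, 1 ≤ k → volume (U k) = (N k : ℝ≥0∞) * ENNReal.ofReal (δ k) := by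
    intro k hk
    rw [hU]
    rw [measure_iUnion (fun i j hij => hdisj k hk i j hij) (fun i => measurableSet_Icc)]
    simp only [Real.volume_Icc, add_sub_cancel_left, tsum_fintype, Finset.sum_const,
      Finset.card_univ, Fintype.card_fin, nsmul_eq_mul]
  have hNδ : ∀ k, 1 ≤ k → (N k : ℝ) * δ k ≤ (N 1 : ℝ) * δ 1 := by
    intro k hk
    have h1 : volume (U k) ≤ volume (U 1) := measure_mono (hUsub1 k hk)
    rw [hvolU k hk, hvolU 1 le_rfl] at h1
    have e1 : ∀ m, 1 ≤ m → (N m : ℝ≥0∞) * ENNReal.ofReal (δ m)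
        = ENNReal.ofReal ((N m : ℝ) * δ m) := by
      intro m hm
      rw [ENNReal.ofReal_mul (Nat.cast_nonneg _), ENNReal.ofReal_natCast]
    rw [e1 k hk, e1 1 le_rfl] at h1
    exact (ENNReal.ofReal_le_ofReal_iff (mul_nonneg (Nat.cast_nonneg _) (hδ 1 le_rfl).le)).1 h1
  -- main step : for every 0 < v < v₀
  have main : ∀ v : ℝ, 0 < v → v < v₀ → ENNReal.ofReal v ≤ dimH E := by
    intro v hv hvv₀
    set t : ℕ → ℝ := fun j => δ (j + 1) / δ (j + 2) * ((N (j + 2) : ℝ) * δ (j + 2) ^ v)⁻¹ with ht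
    have hSt : Summable t := hsum v hvv₀
    have ht0 : Tendsto t atTop (𝓝 0) := hSt.tendsto_atTop_zero
    have htnn : ∀ j, 0 ≤ t j := by
      intro j
      have h1 : 0 < δ (j+1) := hδ (j+1) (by omega)
      have h2 : 0 < δ (j+2) := hδ (j+2) (by omega)
      have h3 : (0:ℝ) < N (j+2) := by exact_mod_cast hN (j+2) (by omega)
      have h4 : 0 < δ (j+2) ^ v := Real.rpow_pos_of_pos h2 v
      positivity
    -- N k → ∞
    have hNinf : Tendsto (fun k => ((N k : ℝ))⁻¹) atTop (𝓝 0) := by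
      rw [← tendsto_add_atTop_iff_nat 2]
      apply squeeze_zero (fun j => by positivity) (g := fun j => δ 1 ^ v * t j)
      · intro j
        have h1 : 0 < δ (j+1) := hδ (j+1) (by omega)
        have h2 : 0 < δ (j+2) := hδ (j+2) (by omega)
        have h3 : (0:ℝ) < N (j+2) := by exact_mod_cast hN (j+2) (by omega)
        have h4 : 0 < δ (j+2) ^ v := Real.rpow_pos_of_pos h2 v
        have h5 : δ (j+2) ≤ δ (j+1) := δ_anti hN hδ hdisj hdvd hsub (j+1) (by omega)
        have h6 : δ (j+2) ≤ δ 1 := δ_le hN hδ hdisj hdvd hsub 1 (j+2) le_rfl (by omega)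
        have h7 : δ (j+2) ^ v ≤ δ 1 ^ v := Real.rpow_le_rpow h2.le h6 hv.le
        have h8 : (1:ℝ) ≤ δ (j+1) / δ (j+2) := (one_le_div h2).2 h5
        have hδ1v : 0 < δ 1 ^ v := Real.rpow_pos_of_pos (hδ 1 le_rfl) v
        rw [ht]
        simp only
        rw [mul_inv]
        calc ((N (j+2) : ℝ))⁻¹ = 1 * ((N (j+2):ℝ))⁻¹ := (one_mul _).symm
          _ ≤ (δ 1 ^ v * (δ (j+2) ^ v)⁻¹) * ((N (j+2):ℝ))⁻¹ := by
              apply mul_le_mul_of_nonneg_right _ (by positivity)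
              rw [← div_eq_mul_inv, le_div_iff₀ h4]
              simpa using h7
          _ = δ 1 ^ v * (1 * (((N (j+2):ℝ))⁻¹ * (δ (j+2) ^ v)⁻¹)) := by ring
          _ ≤ δ 1 ^ v * (δ (j+1) / δ (j+2) * (((N (j+2):ℝ))⁻¹ * (δ (j+2) ^ v)⁻¹)) := by
              apply mul_le_mul_of_nonneg_left _ (by positivity)
              apply mul_le_mul_of_nonneg_right h8 (by positivity)
      · have h9 := ht0.const_mul (δ 1 ^ v)
        rw [mul_zero] at h9
        exact h9
    -- δ → 0
    have hδ0 : Tendsto δ atTop (𝓝 0) := by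
      apply squeeze_zero' (g := fun k => ((N 1 : ℝ) * δ 1) * ((N k : ℝ))⁻¹)
      · filter_upwards [eventually_ge_atTop 1] with k hk
        exact (hδ k hk).le
      · filter_upwards [eventually_ge_atTop 1] with k hk
        have hNk : (0:ℝ) < N k := by exact_mod_cast hN k hk
        have h := hNδ k hk
        calc δ k = δ k * (N k : ℝ) * ((N k : ℝ))⁻¹ := by field_simp
          _ ≤ ((N 1 : ℝ) * δ 1) * ((N k : ℝ))⁻¹ :=
              mul_le_mul_of_nonneg_right (by linarith) (by positivity)
      · simpa using (tendsto_const_nhds (x := (N 1 : ℝ) * δ 1)).mul hNinf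
    -- bound on the summable terms
    obtain ⟨B0, hB0⟩ : BddAbove (Set.range t) := ht0.bddAbove_range
    set B : ℝ := max B0 1 with hBdef
    have hB : ∀ j, t j ≤ B := fun j => le_trans (hB0 (Set.mem_range_self j)) (le_max_left _ _)
    have hB1 : (1:ℝ) ≤ B := le_max_right _ _
    have hBpos : (0:ℝ) < B := by linarith
    -- the Stieltjes function and measure
    set SF : StieltjesFunction ℝ :=
      { toFun := F N δ a
        mono' := F_mono hN hδ hdisj hdvd hsub hNinf
        right_continuous' := fun x =>
          ((F_continuous hN hδ hdisj hdvd hsub hNinf).continuousAt).continuousWithinAt } with hSF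
    set μ : Measure ℝ := SF.measure with hμ
    have hleft : ∀ x, Function.leftLim (F N δ a) x = F N δ a x := fun x =>
      leftLim_eq_of_tendsto
        (((F_continuous hN hδ hdisj hdvd hsub hNinf).tendsto x).mono_left nhdsWithin_le_nhds)
    have hμIcc : ∀ p q : ℝ, p ≤ q → μ (Set.Icc p q)
        = ENNReal.ofReal (F N δ a q - F N δ a p) := by
      intro p q hpq
      rw [hμ, SF.measure_Icc]
      congr 1
      rw [show (SF : ℝ → ℝ) = F N δ a from rfl] at *
      rw [hleft]
    have hμI : ∀ k, 1 ≤ k → ∀ i : Fin (N k),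
        μ (Set.Icc (a k i) (a k i + δ k)) = ENNReal.ofReal ((N k : ℝ)⁻¹) := by
      intro k hk i
      rw [hμIcc _ _ (by linarith [hδ k hk]),
        F_jump hN hδ hdisj hdvd hsub hNinf hk i]
      congr 1
      ring
    have hμuniv : μ Set.univ = 1 := by
      rw [hμ, SF.measure_univ (l := 0) (u := 1)
        (tendsto_F_atBot hN hδ hdisj hdvd hsub hNinf)
        (tendsto_F_atTop hN hδ hdisj hdvd hsub hNinf)]
      simp
    have hμsing : ∀ x : ℝ, μ {x} = 0 := by
      intro x
      have h1 : μ {x} ≤ μ (Set.Icc x x) := measure_mono (by simp)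
      rw [hμIcc x x le_rfl, sub_self, ENNReal.ofReal_zero] at h1
      exact le_antisymm h1 zero_le
    have hμU : ∀ k, 1 ≤ k → μ (U k) = 1 := by
      intro k hk
      rw [hU]
      rw [measure_iUnion (fun i j hij => hdisj k hk i j hij) (fun i => measurableSet_Icc)]
      simp only [hμI k hk]
      rw [tsum_fintype]
      simp only [Finset.sum_const, Finset.card_univ, Fintype.card_fin, nsmul_eq_mul]
      have hNk : (0:ℝ) < (N k : ℝ) := by exact_mod_cast hN k hk
      rw [ENNReal.ofReal_inv_of_pos hNk, ENNReal.ofReal_natCast]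
      exact ENNReal.mul_inv_cancel (by exact_mod_cast (hN k hk).ne') (by simp)
    have hμUc : ∀ k, 1 ≤ k → μ ((U k)ᶜ) = 0 := by
      intro k hk
      rw [measure_compl (hUmeas k) (by rw [hμU k hk]; exact one_ne_top), hμuniv, hμU k hk,
        tsub_self]
    have hμE : (1:ℝ≥0∞) ≤ μ E := by
      have hEc : μ Eᶜ = 0 := by
        rw [hE, Set.compl_iInter]
        apply measure_iUnion_null
        intro k
        rw [Set.compl_iInter]
        apply measure_iUnion_null
        intro hk
        rw [hK k hk]
        exact hμUc k hk
      have h1 := measure_union_le (μ := μ) E Eᶜ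
      rw [Set.union_compl_self, hμuniv, hEc, add_zero] at h1
      exact h1
    -- the covering bound
    have hcov : ∀ s : Set ℝ, EMetric.diam s ≤ ENNReal.ofReal (δ 1 / 2) →
        μ s ≤ ENNReal.ofReal (3 * B) * EMetric.diam s ^ v := by
      intro s hdiam
      rcases eq_or_ne (EMetric.diam s) 0 with hdz|hdne
      · have hss : s.Subsingleton := EMetric.diam_eq_zero_iff.1 hdz
        rcases hss.eq_empty_or_singleton with rfl|⟨x, rfl⟩
        · simp
        · rw [hμsing x]; exact zero_le
      · have hdfin : EMetric.diam s ≠ ⊤ := ne_top_of_le_ne_top ofReal_ne_top hdiam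
        set d : ℝ := (EMetric.diam s).toReal with hd
        have hd0 : 0 < d := ENNReal.toReal_pos hdne hdfin
        have hdiam_eq : EMetric.diam s = ENNReal.ofReal d := (ENNReal.ofReal_toReal hdfin).symm
        have hd_le : d ≤ δ 1 / 2 := by
          have := ENNReal.toReal_mono ofReal_ne_top hdiam
          rwa [ENNReal.toReal_ofReal (by linarith [hδ 1 le_rfl])] at this
        have hdlt : d < δ 1 := by linarith [hδ 1 le_rfl]
        have hsne : s.Nonempty := by
          rcases Set.eq_empty_or_nonempty s with rfl|h
          · exact absurd EMetric.diam_empty hdne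
          · exact h
        have hsb : Bornology.IsBounded s := Metric.isBounded_iff_ediam_ne_top.2 hdfin
        have hdist : ∀ y ∈ s, ∀ z ∈ s, dist y z ≤ d :=
          fun y hy z hz => Metric.dist_le_diam_of_mem hsb hy hz
        set c : ℝ := sInf s with hc
        have hbdd : BddBelow s := hsb.bddBelow
        have hyc : ∀ y ∈ s, c ≤ y ∧ y ≤ c + d := by
          intro y hy
          refine ⟨csInf_le hbdd hy, ?_⟩
          have h1 : y - d ≤ c := by
            apply le_csInf hsne
            intro z hz
            have h2 := hdist y hy z hz
            rw [Real.dist_eq] at h2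
            have := abs_le.1 h2
            linarith [this.1]
          linarith
        -- find the right level
        have hPex : ∃ n, δ (n+1) ≤ d := by
          obtain ⟨m, hm⟩ := ((hδ0.eventually_lt_const hd0).and (eventually_ge_atTop 1)).exists
          refine ⟨m - 1, ?_⟩
          have : m - 1 + 1 = m := by omega
          rw [this]
          exact hm.1.le
        set l : ℕ := Nat.find hPex with hl
        have hdk : δ (l+1) ≤ d := Nat.find_spec hPex
        have hl1 : 1 ≤ l := by
          by_contra h
          have : l = 0 := by omega
          rw [this] at hdk
          linarith
        have hdl : d < δ l := by
          have h1 := Nat.find_min hPex (show l - 1 < l by omega)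
          have h2 : l - 1 + 1 = l := by omega
          rw [h2] at h1
          linarith [not_le.1 h1]
        -- the finset of touching intervals
        set T : Finset (Fin (N (l+1))) := Finset.univ.filter
          (fun i => (Set.Icc (a (l+1) i) (a (l+1) i + δ (l+1)) ∩ s).Nonempty) with hT
        have he : 0 < δ (l+1) := hδ (l+1) (by omega)
        have hn : (0:ℝ) < (N (l+1) : ℝ) := by exact_mod_cast hN (l+1) (by omega)
        -- cardinality bound via Lebesgue measure
        have hTsub : ∀ i ∈ T, Set.Icc (a (l+1) i) (a (l+1) i + δ (l+1)) ⊆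
            Set.Icc (c - δ (l+1)) (c + d + δ (l+1)) := by
          intro i hi
          obtain ⟨y, hy1, hy2⟩ := (Finset.mem_filter.1 hi).2
          rcases hy1 with ⟨hy3, hy4⟩
          obtain ⟨hc1, hc2⟩ := hyc y hy2
          intro z hz
          rcases hz with ⟨hz1, hz2⟩
          constructor <;> [linarith; linarith]
        have hvolT : (T.card : ℝ) * δ (l+1) ≤ d + 2 * δ (l+1) := by
          have h1 : ∑ i ∈ T, volume (Set.Icc (a (l+1) i) (a (l+1) i + δ (l+1)))
              = volume (⋃ i ∈ T, Set.Icc (a (l+1) i) (a (l+1) i + δ (l+1))) := by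
            rw [measure_biUnion_finset
              (fun i _ j _ hij => hdisj (l+1) (by omega) i j hij)
              (fun i _ => measurableSet_Icc)]
          have h2 : volume (⋃ i ∈ T, Set.Icc (a (l+1) i) (a (l+1) i + δ (l+1)))
              ≤ volume (Set.Icc (c - δ (l+1)) (c + d + δ (l+1))) :=
            measure_mono (Set.iUnion₂_subset hTsub)
          rw [← h1] at h2
          simp only [Real.volume_Icc, add_sub_cancel_left, Finset.sum_const, nsmul_eq_mul] at h2
          have h3 : c + d + δ (l+1) - (c - δ (l+1)) = d + 2 * δ (l+1) := by ring
          rw [h3] at h2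
          have h4 : (T.card : ℝ≥0∞) * ENNReal.ofReal (δ (l+1))
              = ENNReal.ofReal ((T.card : ℝ) * δ (l+1)) := by
            rw [ENNReal.ofReal_mul (p := (T.card : ℝ)) (Nat.cast_nonneg _), ENNReal.ofReal_natCast]
          rw [h4] at h2
          exact (ENNReal.ofReal_le_ofReal_iff (by positivity)).1 h2
        -- measure bound
        have hμs : μ s ≤ (T.card : ℝ≥0∞) * ENNReal.ofReal ((N (l+1) : ℝ)⁻¹) := by
          have h1 : μ s ≤ μ (s ∩ U (l+1)) + μ (s \ U (l+1)) :=
            measure_le_inter_add_diff μ s (U (l+1))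
          have h2 : μ (s \ U (l+1)) = 0 := by
            apply le_antisymm _ zero_le
            rw [← hμUc (l+1) (by omega)]
            exact measure_mono (fun x hx => hx.2)
          have h3 : s ∩ U (l+1) ⊆ ⋃ i ∈ T, Set.Icc (a (l+1) i) (a (l+1) i + δ (l+1)) := by
            intro x hx
            rcases Set.mem_iUnion.1 hx.2 with ⟨i, hi⟩
            have hiT : i ∈ T := Finset.mem_filter.2 ⟨Finset.mem_univ i, ⟨x, hi, hx.1⟩⟩
            exact Set.mem_biUnion hiT hi
          have h4 : μ (s ∩ U (l+1)) ≤ ∑ i ∈ T, μ (Set.Icc (a (l+1) i) (a (l+1) i + δ (l+1))) :=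
            le_trans (measure_mono h3) (measure_biUnion_finset_le T _)
          simp only [hμI (l+1) (by omega)] at h4
          rw [Finset.sum_const, nsmul_eq_mul] at h4
          calc μ s ≤ μ (s ∩ U (l+1)) + μ (s \ U (l+1)) := h1
            _ = μ (s ∩ U (l+1)) := by rw [h2, add_zero]
            _ ≤ (T.card : ℝ≥0∞) * ENNReal.ofReal ((N (l+1) : ℝ)⁻¹) := h4
        -- real arithmetic
        have hreal : (T.card : ℝ) * (N (l+1) : ℝ)⁻¹ ≤ 3 * B * d ^ v := by
          have hdv : 0 < d ^ v := Real.rpow_pos_of_pos hd0 v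
          have hev : 0 < δ (l+1) ^ v := Real.rpow_pos_of_pos he v
          have hD : 0 < δ l := hδ l hl1
          have htB : δ l / δ (l+1) * ((N (l+1) : ℝ) * δ (l+1) ^ v)⁻¹ ≤ B := by
            have h1 := hB (l - 1)
            have e1 : l - 1 + 1 = l := by omega
            have e2 : l - 1 + 2 = l + 1 := by omega
            rw [ht] at h1
            simp only at h1
            rw [e1, e2] at h1
            exact h1
          have hcard2 : (T.card : ℝ) ≤ 3 * d / δ (l+1) := by
            rw [le_div_iff₀ he]
            linarith
          have key : d / (δ (l+1) * (N (l+1) : ℝ)) ≤ B * d ^ v := by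
            have e1 : d = d ^ (1 - v) * d ^ v := by
              rw [← Real.rpow_add hd0]
              have : 1 - v + v = 1 := by ring
              rw [this, Real.rpow_one]
            have e2 : d ^ (1 - v) ≤ δ l / δ (l+1) ^ v := by
              rw [Real.rpow_sub hd0, Real.rpow_one]
              exact div_le_div₀ hD.le hdl.le hev (Real.rpow_le_rpow he.le hdk hv.le)
            calc d / (δ (l+1) * (N (l+1) : ℝ))
                = d ^ (1-v) * d ^ v / (δ (l+1) * (N (l+1) : ℝ)) := by rw [← e1]
              _ ≤ (δ l / δ (l+1) ^ v) * d ^ v / (δ (l+1) * (N (l+1) : ℝ)) := by gcongr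
              _ = (δ l / δ (l+1) * ((N (l+1) : ℝ) * δ (l+1) ^ v)⁻¹) * d ^ v := by
                  field_simp
              _ ≤ B * d ^ v := mul_le_mul_of_nonneg_right htB hdv.le
          calc (T.card : ℝ) * (N (l+1) : ℝ)⁻¹ ≤ (3 * d / δ (l+1)) * (N (l+1) : ℝ)⁻¹ :=
                mul_le_mul_of_nonneg_right hcard2 (by positivity)
            _ = 3 * (d / (δ (l+1) * (N (l+1) : ℝ))) := by field_simp
            _ ≤ 3 * (B * d ^ v) := by linarith [key]
            _ = 3 * B * d ^ v := by ring
        -- conclude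
        calc μ s ≤ (T.card : ℝ≥0∞) * ENNReal.ofReal ((N (l+1) : ℝ)⁻¹) := hμs
          _ = ENNReal.ofReal ((T.card : ℝ) * (N (l+1) : ℝ)⁻¹) := by
              rw [ENNReal.ofReal_mul (p := (T.card : ℝ)) (Nat.cast_nonneg _), ENNReal.ofReal_natCast]
          _ ≤ ENNReal.ofReal (3 * B * d ^ v) := ENNReal.ofReal_le_ofReal hreal
          _ = ENNReal.ofReal (3 * B) * ENNReal.ofReal (d ^ v) := by
              rw [ENNReal.ofReal_mul (by positivity)]
          _ = ENNReal.ofReal (3 * B) * EMetric.diam s ^ v := by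
              rw [hdiam_eq, ← ENNReal.ofReal_rpow_of_pos hd0]
    -- mass distribution principle
    set C : ℝ≥0∞ := ENNReal.ofReal (3 * B) with hC
    have hC0 : C ≠ 0 := (ENNReal.ofReal_pos.2 (by linarith)).ne'
    have hCt : C ≠ ⊤ := ofReal_ne_top
    have hle : C⁻¹ • μ ≤ μH[v] := by
      apply MeasureTheory.Measure.le_hausdorffMeasure v _ (ENNReal.ofReal (δ 1 / 2))
        (ENNReal.ofReal_pos.2 (by linarith [hδ 1 le_rfl]))
      intro s hs
      rw [Measure.smul_apply, smul_eq_mul]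
      calc C⁻¹ * μ s ≤ C⁻¹ * (C * EMetric.diam s ^ v) := mul_le_mul_right (hcov s hs) _
        _ = EMetric.diam s ^ v := by rw [← mul_assoc, ENNReal.inv_mul_cancel hC0 hCt, one_mul]
    have hEH : C⁻¹ ≤ μH[v] E := by
      calc C⁻¹ = C⁻¹ * 1 := (mul_one _).symm
        _ ≤ C⁻¹ * μ E := mul_le_mul_right hμE _
        _ = (C⁻¹ • μ) E := by rw [Measure.smul_apply, smul_eq_mul]
        _ ≤ μH[v] E := Measure.le_iff'.1 hle E
    have hne0 : μH[v] E ≠ 0 :=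
      (lt_of_lt_of_le (ENNReal.inv_pos.2 hCt) hEH).ne'
    have hveq : ((v.toNNReal : ℝ≥0) : ℝ) = v := Real.coe_toNNReal v hv.le
    have hne0' : μH[((v.toNNReal : ℝ≥0) : ℝ)] E ≠ 0 := by rwa [hveq]
    have := le_dimH_of_hausdorffMeasure_ne_zero hne0'
    rwa [show ((v.toNNReal : ℝ≥0) : ℝ≥0∞) = ENNReal.ofReal v from rfl] at this
  -- take the limit v → v₀
  have hseq : Tendsto (fun n : ℕ => ENNReal.ofReal (v₀ - v₀ / (n + 2))) atTop
      (𝓝 (ENNReal.ofReal v₀)) := by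
    have h2 : Tendsto (fun n : ℕ => v₀ / ((n : ℝ) + 2)) atTop (𝓝 0) := by
      apply Tendsto.div_atTop tendsto_const_nhds
      exact tendsto_atTop_add_const_right _ 2 tendsto_natCast_atTop_atTop
    have h1 : Tendsto (fun n : ℕ => v₀ - v₀ / ((n : ℝ) + 2)) atTop (𝓝 v₀) := by
      simpa using tendsto_const_nhds.sub h2
    exact (ENNReal.continuous_ofReal.tendsto v₀).comp h1
  apply le_of_tendsto hseq
  filter_upwards with n
  have hpos : (0:ℝ) < (n:ℝ) + 2 := by positivity
  have h1 : v₀ / ((n:ℝ) + 2) < v₀ := div_lt_self hv₀ (by have : (0:ℝ) ≤ (n:ℝ) := Nat.cast_nonneg n; linarith)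
  have h2 : 0 < v₀ / ((n:ℝ) + 2) := by positivity
  exact main _ (by linarith) (by linarith)
end
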